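/- With notation as above, for g ∈ ℚ[x_1,...,x_n]: det g(M_{x_1},...,M_{x_n}) = 0 if and only if there exists (ε_1,...,ε_n) ∈ {0,1}^n with g(ε_1,...,ε_n) = 0. Equivalently, the quantifier-free condition det g(M_{x_1},...,M_{x_n}) = 0 is equivalent to ∃x_1...∃x_n (⋀_{i=1}^n x_i² − x_i = 0 ∧ g(x_1,...,x_n) = 0) over ℚ (or ℂ). -/

import Mathlib

open MvPolynomial

set_option synthInstance.maxHeartbeats 1000000
set_option maxHeartbeats 1000000

/-- The ideal `(x₁²−x₁, …, xₙ²−xₙ)` of `ℚ[x₁,…,xₙ]`. -/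
noncomputable def boolIdeal (n : ℕ) : Ideal (MvPolynomial (Fin n) ℚ) :=
  Ideal.span (Set.range fun i : Fin n => X i ^ 2 - X i)

/-- The quotient algebra `A = ℚ[x₁,…,xₙ]/(x₁²−x₁,…,xₙ²−xₙ)`. -/
abbrev BoolQuot (n : ℕ) : Type := MvPolynomial (Fin n) ℚ ⧸ boolIdeal n

/-- Substitution of the (pairwise commuting) matrices `M i` for the
variables `xᵢ` in a polynomial `g`: `g(M₁,…,Mₙ)`. -/
noncomputable def matSubst {n : ℕ} {N : Type*} [Fintype N] [DecidableEq N]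
    (M : Fin n → Matrix N N ℚ) (g : MvPolynomial (Fin n) ℚ) : Matrix N N ℚ :=
  ∑ d ∈ g.support,
    g.coeff d • ((List.finRange n).map fun i => M i ^ d i).prod

/-- Evaluation of polynomials at all points of `{0,1}ⁿ` simultaneously. -/
noncomputable def boolEval (n : ℕ) : MvPolynomial (Fin n) ℚ →ₐ[ℚ] ((Fin n → Bool) → ℚ) :=
  Pi.algHom ℚ _ fun ε => aeval (fun i => if ε i then (1 : ℚ) else 0)

lemma boolEval_apply {n : ℕ} (g : MvPolynomial (Fin n) ℚ) (ε : Fin n → Bool) :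
    boolEval n g ε = eval (fun i => if ε i then (1 : ℚ) else 0) g := by
  simp [boolEval, aeval_def, eval₂_eq_eval_map, Algebra.algebraMap_self, map_id]

lemma boolEval_vanish {n : ℕ} : ∀ a ∈ boolIdeal n, boolEval n a = 0 := by
  intro a ha
  rw [← RingHom.mem_ker]
  revert a ha
  rw [← SetLike.le_def, boolIdeal, Ideal.span_le]
  rintro _ ⟨i, rfl⟩
  simp only [SetLike.mem_coe, RingHom.mem_ker, map_sub, map_pow]
  funext ε
  by_cases h : ε i <;> simp [boolEval_apply, h]

/-- The induced map `A → ℚ^{2ⁿ}`. -/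
noncomputable def boolEvalQ (n : ℕ) : BoolQuot n →ₐ[ℚ] ((Fin n → Bool) → ℚ) :=
  Ideal.Quotient.liftₐ (boolIdeal n) (boolEval n) boolEval_vanish

lemma boolEvalQ_mk {n : ℕ} (g : MvPolynomial (Fin n) ℚ) :
    boolEvalQ n (Ideal.Quotient.mk (boolIdeal n) g) = boolEval n g := by
  simp [boolEvalQ]
  exact Ideal.Quotient.lift_mk _ _ _

lemma boolEvalQ_surjective (n : ℕ) : Function.Surjective (boolEvalQ n) := by
  intro h
  refine ⟨Ideal.Quotient.mk _ (∑ ε : Fin n → Bool,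
    C (h ε) * ∏ i, if ε i then X i else 1 - X i), ?_⟩
  rw [boolEvalQ_mk]
  funext ε'
  rw [boolEval_apply]
  simp only [map_sum, map_mul, eval_C, map_prod]
  have key : ∀ ε : Fin n → Bool,
      (∏ i, eval (fun i => if ε' i then (1:ℚ) else 0) (if ε i then X i else 1 - X i))
        = if ε = ε' then 1 else 0 := by
    intro ε
    have : ∀ i : Fin n,
        eval (fun i => if ε' i then (1:ℚ) else 0) (if ε i then X i else 1 - X i)
          = if ε i = ε' i then 1 else 0 := by
      intro i
      cases h1 : ε i <;> cases h2 : ε' i <;> simp [h1, h2]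
    simp only [this, Fintype.prod_boole]
    congr 1
    simp [funext_iff]
  simp only [key, mul_ite, mul_one, mul_zero]
  rw [Finset.sum_ite_eq' Finset.univ ε' h]
  simp

lemma list_prod_pow_eq_monomial {n : ℕ} (d : Fin n →₀ ℕ) :
    ((List.finRange n).map fun i => (X i : MvPolynomial (Fin n) ℚ) ^ d i).prod
      = monomial d 1 := by
  rw [← Fin.prod_univ_def]
  rw [← prod_X_pow_eq_monomial]
  refine (Finset.prod_subset (Finset.subset_univ _) ?_).symm
  intro i _ hi
  simp only [Finsupp.mem_support_iff, not_not] at hi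
  simp [hi]

/-- `matSubst` agrees with any algebra homomorphism on the variables. -/
lemma matSubst_eq_algHom {n : ℕ} {N : Type*} [Fintype N] [DecidableEq N]
    (Φ : MvPolynomial (Fin n) ℚ →ₐ[ℚ] Matrix N N ℚ)
    (M : Fin n → Matrix N N ℚ) (hM : ∀ i, M i = Φ (X i))
    (g : MvPolynomial (Fin n) ℚ) : matSubst M g = Φ g := by
  conv_rhs => rw [g.as_sum]
  rw [map_sum, matSubst]
  refine Finset.sum_congr rfl fun d _ => ?_
  have : (monomial d (g.coeff d) : MvPolynomial (Fin n) ℚ)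
      = g.coeff d • ((List.finRange n).map fun i => (X i : MvPolynomial (Fin n) ℚ) ^ d i).prod := by
    rw [list_prod_pow_eq_monomial]
    simp [smul_monomial]
  rw [this, map_smul, map_list_prod]
  congr 2
  simp only [List.map_map]
  refine List.map_congr_left fun i _ => ?_
  simp [hM i]

lemma det_mulLeft_pi {n : ℕ} (h : (Fin n → Bool) → ℚ) :
    LinearMap.det (LinearMap.mulLeft ℚ h) = ∏ ε, h ε := by
  rw [← LinearMap.det_toMatrix (Pi.basisFun ℚ (Fin n → Bool))]
  have : LinearMap.toMatrix (Pi.basisFun ℚ (Fin n → Bool)) (Pi.basisFun ℚ (Fin n → Bool))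
      (LinearMap.mulLeft ℚ h) = Matrix.diagonal h := by
    ext i j
    rw [LinearMap.toMatrix_apply]
    simp [LinearMap.mulLeft_apply, Pi.basisFun_apply, Matrix.diagonal,
      Pi.single_apply, eq_comm]
  rw [this, Matrix.det_diagonal]

/-- with the multiplication matrices `M i` of the classes of
the `xᵢ` w.r.t. the monomial basis of `A = ℚ[x]/(x₁²−x₁,…,xₙ²−xₙ)`, for
any `g ∈ ℚ[x₁,…,xₙ]`: `det g(M₁,…,Mₙ) = 0` iff `g` vanishes at some point
of `{0,1}ⁿ`, iff `∃ x₁…xₙ (⋀ᵢ xᵢ²−xᵢ = 0 ∧ g(x) = 0)` holds. -/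
theorem stmt_6 (n : ℕ)
    (b : Module.Basis (Fin n → Bool) ℚ (BoolQuot n))
    (hb : ∀ δ : Fin n → Bool,
      b δ = Ideal.Quotient.mk (boolIdeal n) (∏ i, if δ i then X i else 1))
    (M : Fin n → Matrix (Fin n → Bool) (Fin n → Bool) ℚ)
    (hM : ∀ i, M i = LinearMap.toMatrix b b
      (LinearMap.mulLeft ℚ (Ideal.Quotient.mk (boolIdeal n) (X i))))
    (g : MvPolynomial (Fin n) ℚ) :
    ((matSubst M g).det = 0
      ↔ ∃ ε : Fin n → Bool, eval (fun i => if ε i then (1 : ℚ) else 0) g = 0) ∧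
    ((matSubst M g).det = 0
      ↔ ∃ x : Fin n → ℚ, (∀ i, x i ^ 2 - x i = 0) ∧ eval x g = 0) := by
  classical
  haveI : Module.Finite ℚ (BoolQuot n) := Module.Finite.of_basis b
  -- the algebra hom sending g to the matrix of multiplication by (mk g)
  set Φ : MvPolynomial (Fin n) ℚ →ₐ[ℚ] Matrix (Fin n → Bool) (Fin n → Bool) ℚ :=
    (LinearMap.toMatrixAlgEquiv b).toAlgHom.comp
      ((Algebra.lmul ℚ (BoolQuot n)).comp (Ideal.Quotient.mkₐ ℚ (boolIdeal n))) with hΦ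
  have hΦX : ∀ i, M i = Φ (X i) := by
    intro i
    rw [hM i, hΦ]
    rfl
  have hms : matSubst M g = Φ g := matSubst_eq_algHom Φ M hΦX g
  -- the evaluation isomorphism
  have hinj : Function.Injective (boolEvalQ n) := by
    have h2 : Function.Injective (boolEvalQ n).toLinearMap := by
      rw [LinearMap.injective_iff_surjective_of_finrank_eq_finrank]
      · exact boolEvalQ_surjective n
      · rw [Module.finrank_eq_card_basis b, Module.finrank_pi]
    exact h2
  let e : BoolQuot n ≃ₐ[ℚ] ((Fin n → Bool) → ℚ) :=
    AlgEquiv.ofBijective (boolEvalQ n) ⟨hinj, boolEvalQ_surjective n⟩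
  -- determinant computation
  have hdet : (matSubst M g).det = ∏ ε : Fin n → Bool,
      eval (fun i => if ε i then (1 : ℚ) else 0) g := by
    rw [hms, hΦ]
    have : (LinearMap.toMatrixAlgEquiv b).toAlgHom
        ((Algebra.lmul ℚ (BoolQuot n)) (Ideal.Quotient.mkₐ ℚ (boolIdeal n) g))
        = LinearMap.toMatrix b b
          (LinearMap.mulLeft ℚ (Ideal.Quotient.mk (boolIdeal n) g)) := rfl
    simp only [AlgHom.comp_apply, this]
    rw [LinearMap.det_toMatrix]
    have hconj : LinearMap.mulLeft ℚ (e (Ideal.Quotient.mk (boolIdeal n) g))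
        = (e.toLinearEquiv : BoolQuot n →ₗ[ℚ] _) ∘ₗ
          (LinearMap.mulLeft ℚ (Ideal.Quotient.mk (boolIdeal n) g)) ∘ₗ
          (e.toLinearEquiv.symm : _ →ₗ[ℚ] BoolQuot n) := by
      refine LinearMap.ext fun h => ?_
      simp only [LinearMap.coe_comp, Function.comp_apply, LinearMap.mulLeft_apply,
        LinearEquiv.coe_coe, AlgEquiv.toLinearEquiv_apply, map_mul]
      congr 1
      exact (e.apply_symm_apply h).symm
    have := LinearMap.det_conj (LinearMap.mulLeft ℚ (Ideal.Quotient.mk (boolIdeal n) g))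
      e.toLinearEquiv
    rw [← this, ← hconj, det_mulLeft_pi]
    refine Finset.prod_congr rfl fun ε _ => ?_
    show boolEvalQ n (Ideal.Quotient.mk (boolIdeal n) g) ε = _
    rw [boolEvalQ_mk, boolEval_apply]
  have h1 : (matSubst M g).det = 0
      ↔ ∃ ε : Fin n → Bool, eval (fun i => if ε i then (1 : ℚ) else 0) g = 0 := by
    rw [hdet, Finset.prod_eq_zero_iff]
    simp
  refine ⟨h1, h1.trans ⟨?_, ?_⟩⟩
  · rintro ⟨ε, hε⟩
    refine ⟨fun i => if ε i then 1 else 0, fun i => by by_cases h : ε i <;> simp [h], hε⟩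
  · rintro ⟨x, hx, hgx⟩
    refine ⟨fun i => decide (x i = 1), ?_⟩
    have hx' : ∀ i, x i = 0 ∨ x i = 1 := by
      intro i
      have h := hx i
      have : x i * (x i - 1) = 0 := by ring_nf; linarith [hx i]
      rcases mul_eq_zero.mp this with h' | h'
      · exact Or.inl h'
      · exact Or.inr (by linarith)
    have : (fun i => if decide (x i = 1) = true then (1:ℚ) else 0) = x := by
      funext i
      rcases hx' i with h | h <;> simp [h]
    rw [this]
    exact hgx
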